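/- Let X be a strictly convex real Banach space. Let Z := X × c₀(ℕ), define Φ(x, y) = ‖x‖ + Σ_{n=1}^∞ (y_n)^{2n} for (x, y) ∈ Z, and let |||z||| := inf{ λ > 0 : Φ(z/λ) ≤ 1 }. Then (Z, |||·|||) is almost square: for every finite list z₁, …, z_k ∈ Z with |||z_i||| = 1 for all i and every ε > 0, there exists h ∈ Z with |||h||| = 1 and |||z_i + h||| ≤ 1 + ε for all i = 1, …, k. -/

import Mathlib

/-- Membership in `c₀(ℕ)`: sequences converging to `0`. -/
def IsC0Seq (y : ℕ → ℝ) : Prop := Filter.Tendsto y Filter.atTop (nhds 0)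

/-- The function `Φ(x, y) = ‖x‖ + Σ_{n=1}^∞ y_n^{2n}` on `Z = X × c₀(ℕ)`, where the
Lean coordinate `n : ℕ` plays the role of the paper's coordinate `n + 1`. -/
noncomputable def PhiZ {X : Type*} [NormedAddCommGroup X] (z : X × (ℕ → ℝ)) : ℝ :=
  ‖z.1‖ + ∑' n : ℕ, (z.2 n) ^ (2 * (n + 1))

/-- The Minkowski functional `|||z||| = inf { λ > 0 : Φ(z/λ) ≤ 1 }` of `{Φ ≤ 1}`. -/
noncomputable def tnormZ {X : Type*} [NormedAddCommGroup X] [NormedSpace ℝ X]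
    (z : X × (ℕ → ℝ)) : ℝ :=
  sInf {l : ℝ | 0 < l ∧ PhiZ (l⁻¹ • z) ≤ 1}

lemma pow_two_mul_nonneg (a : ℝ) (n : ℕ) : 0 ≤ a ^ (2 * n) := by
  rw [pow_mul]; positivity

lemma summable_pow_c0 {y : ℕ → ℝ} (hy : Filter.Tendsto y Filter.atTop (nhds 0)) :
    Summable fun n => y n ^ (2 * (n + 1)) := by
  have h2 : Summable fun n : ℕ => (1/2 : ℝ) ^ n :=
    summable_geometric_of_lt_one (by norm_num) (by norm_num)
  apply Summable.of_norm_bounded_eventually_nat h2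
  have hb := hy.eventually (Metric.ball_mem_nhds (0:ℝ) (by norm_num : (0:ℝ) < 1/2))
  filter_upwards [hb] with n hn
  have hn' : |y n| ≤ 1/2 := by
    simpa [Real.norm_eq_abs] using (mem_ball_zero_iff.mp hn).le
  rw [Real.norm_eq_abs, abs_pow]
  calc |y n| ^ (2*(n+1)) ≤ (1/2:ℝ) ^ (2*(n+1)) := pow_le_pow_left₀ (abs_nonneg _) hn' _
    _ ≤ (1/2:ℝ) ^ n := pow_le_pow_of_le_one (by norm_num) (by norm_num) (by omega)

/-- If `X` is strictly convex, then `(Z, |||·|||)` with `Z = X × c₀(ℕ)` is almost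
square. -/
theorem tnormZ_almost_square
    {X : Type*} [NormedAddCommGroup X] [NormedSpace ℝ X] [CompleteSpace X]
    (hX : ∀ x y : X, ‖x‖ = 1 → ‖y‖ = 1 → ‖x + y‖ = 2 → x = y) :
    ∀ (k : ℕ) (z : Fin k → X × (ℕ → ℝ)), (∀ i, IsC0Seq (z i).2) →
      (∀ i, tnormZ (z i) = 1) → ∀ ε : ℝ, 0 < ε →
        ∃ h : X × (ℕ → ℝ), IsC0Seq h.2 ∧ tnormZ h = 1 ∧
          ∀ i, tnormZ (z i + h) ≤ 1 + ε := by
  intro k z hc0 hnorm ε hε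
  have hu : (0:ℝ) < 1 + ε := by linarith
  set q : ℝ := (1 + ε/2)/(1+ε) with hq
  have hq0 : 0 ≤ q := by positivity
  have hq1 : q < 1 := by rw [hq, div_lt_one hu]; linarith
  -- choose N
  have hev1 : ∀ᶠ n in Filter.atTop, ∀ i, |(z i).2 n| ≤ ε/2 := by
    rw [Filter.eventually_all]
    intro i
    have hb := (hc0 i).eventually
      (Metric.ball_mem_nhds (0:ℝ) (by positivity : (0:ℝ) < ε/2))
    filter_upwards [hb] with n hn
    simpa [Real.norm_eq_abs] using (mem_ball_zero_iff.mp hn).le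
  have hev2 : ∀ᶠ n in Filter.atTop, q ^ (2*(n+1)) ≤ (ε/2)/(1+ε) := by
    have h1 : Filter.Tendsto (fun m : ℕ => q ^ m) Filter.atTop (nhds 0) :=
      tendsto_pow_atTop_nhds_zero_of_lt_one hq0 hq1
    have h2 : Filter.Tendsto (fun n : ℕ => 2*(n+1)) Filter.atTop Filter.atTop :=
      Filter.tendsto_atTop_atTop.mpr fun b => ⟨b, fun n hn => by omega⟩
    have ht := h1.comp h2
    have hc : (0:ℝ) < (ε/2)/(1+ε) := by positivity
    filter_upwards [ht.eventually_lt_const hc] with n hn using hn.le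
  obtain ⟨N, hN1, hN2⟩ := (hev1.and hev2).exists
  refine ⟨((0:X), fun n => if n = N then (1:ℝ) else 0), ?_, ?_, ?_⟩
  · -- c₀
    have heq : (fun _ : ℕ => (0:ℝ)) =ᶠ[Filter.atTop]
        fun n => if n = N then (1:ℝ) else 0 := by
      filter_upwards [Filter.eventually_ge_atTop (N+1)] with n hn
      simp [show n ≠ N by omega]
    exact Filter.Tendsto.congr' heq tendsto_const_nhds
  · -- tnormZ h = 1
    have hset : ∀ l : ℝ,
        PhiZ (l⁻¹ • (((0:X), fun n => if n = N then (1:ℝ) else 0) : X × (ℕ → ℝ)))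
          = (l⁻¹)^(2*(N+1)) := by
      intro l
      rw [PhiZ]
      simp only [Prod.smul_fst, Prod.smul_snd, smul_zero, norm_zero, Pi.smul_apply,
        smul_eq_mul, zero_add]
      rw [tsum_congr (fun n => show (l⁻¹ * if n = N then (1:ℝ) else 0)^(2*(n+1))
            = if n = N then (l⁻¹)^(2*(N+1)) else 0 by
          split_ifs with hn
          · subst hn; rw [mul_one]
          · rw [mul_zero, zero_pow (by omega : 2*(n+1) ≠ 0)])]
      exact tsum_ite_eq N (fun _ => (l⁻¹)^(2*(N+1)))
    have hSeq : {l : ℝ | 0 < l ∧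
        PhiZ (l⁻¹ • (((0:X), fun n => if n = N then (1:ℝ) else 0) : X × (ℕ → ℝ))) ≤ 1}
        = Set.Ici 1 := by
      ext l
      simp only [Set.mem_setOf_eq, Set.mem_Ici, hset l]
      constructor
      · rintro ⟨hl, hΦ⟩
        by_contra hc
        push_neg at hc
        have h1 : 1 < l⁻¹ := one_lt_inv_iff₀.mpr ⟨hl, hc⟩
        have := one_lt_pow₀ h1 (by omega : 2*(N+1) ≠ 0)
        linarith
      · intro hl
        have hl0 : 0 < l := lt_of_lt_of_le one_pos hl
        exact ⟨hl0, pow_le_one₀ (inv_nonneg.mpr hl0.le) ((inv_le_one₀ hl0).mpr hl)⟩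
    rw [tnormZ, hSeq, csInf_Ici]
  · -- main estimate
    intro i
    -- extract l
    obtain ⟨l, hl0, hlΦ, hl2⟩ : ∃ l : ℝ, 0 < l ∧ PhiZ (l⁻¹ • z i) ≤ 1 ∧ l ≤ 1 + ε/2 := by
      have hbdd : BddBelow {l : ℝ | 0 < l ∧ PhiZ (l⁻¹ • z i) ≤ 1} :=
        ⟨0, fun x hx => hx.1.le⟩
      have hone : sInf {l : ℝ | 0 < l ∧ PhiZ (l⁻¹ • z i) ≤ 1} = 1 := hnorm i
      have hSne : {l : ℝ | 0 < l ∧ PhiZ (l⁻¹ • z i) ≤ 1}.Nonempty := by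
        by_contra hne
        rw [Set.not_nonempty_iff_eq_empty] at hne
        rw [hne, Real.sInf_empty] at hone
        norm_num at hone
      have hlt : sInf {l : ℝ | 0 < l ∧ PhiZ (l⁻¹ • z i) ≤ 1} < 1 + ε/2 := by
        rw [hone]; linarith
      obtain ⟨l, hlS, hll⟩ := (csInf_lt_iff hbdd hSne).mp hlt
      exact ⟨l, hlS.1, hlS.2, hll.le⟩
    have hlu : l ≤ 1 + ε := by linarith
    apply csInf_le ⟨0, fun x hx => hx.1.le⟩
    refine ⟨hu, ?_⟩
    rw [PhiZ]
    simp only [Prod.smul_fst, Prod.smul_snd, Prod.fst_add, Prod.snd_add, Pi.smul_apply,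
      Pi.add_apply, smul_eq_mul, add_zero]
    have hindc0 : Filter.Tendsto (fun n : ℕ => if n = N then (1:ℝ) else 0)
        Filter.atTop (nhds 0) := by
      have heq : (fun _ : ℕ => (0:ℝ)) =ᶠ[Filter.atTop]
          fun n => if n = N then (1:ℝ) else 0 := by
        filter_upwards [Filter.eventually_ge_atTop (N+1)] with n hn
        simp [show n ≠ N by omega]
      exact Filter.Tendsto.congr' heq tendsto_const_nhds
    have hfs : Summable (fun n =>
        ((1 + ε)⁻¹ * ((z i).2 n + if n = N then 1 else 0)) ^ (2 * (n + 1))) := by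
      apply summable_pow_c0
      have h1 : Filter.Tendsto (fun n => (z i).2 n + if n = N then (1:ℝ) else 0)
          Filter.atTop (nhds 0) := by simpa using (hc0 i).add hindc0
      simpa using h1.const_mul ((1+ε)⁻¹)
    have hgs : Summable (fun n => (l⁻¹ * (z i).2 n) ^ (2 * (n + 1))) :=
      summable_pow_c0 (by simpa using (hc0 i).const_mul l⁻¹)
    rw [hfs.tsum_eq_add_tsum_ite N]
    have hΦ' : ‖l⁻¹ • (z i).1‖ + ∑' n, (l⁻¹ * (z i).2 n) ^ (2 * (n + 1)) ≤ 1 := by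
      have h := hlΦ
      rw [PhiZ] at h
      simpa only [Prod.smul_fst, Prod.smul_snd, Pi.smul_apply, smul_eq_mul] using h
    have hterm : ∀ n, (if n = N then 0 else
        ((1 + ε)⁻¹ * ((z i).2 n + if n = N then 1 else 0)) ^ (2 * (n + 1)))
        ≤ (l/(1+ε)) * (l⁻¹ * (z i).2 n) ^ (2 * (n + 1)) := by
      intro n
      split_ifs with hn
      · exact mul_nonneg (div_nonneg hl0.le hu.le) (pow_two_mul_nonneg _ _)
      · have hx : (1 + ε)⁻¹ * ((z i).2 n + 0) = (l/(1+ε)) * (l⁻¹ * (z i).2 n) := by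
          field_simp
          ring
        rw [hx, mul_pow]
        have h1 : (l/(1+ε))^(2*(n+1)) ≤ l/(1+ε) :=
          pow_le_of_le_one (div_nonneg hl0.le hu.le)
            (by rw [div_le_one hu]; exact hlu) (by omega)
        exact mul_le_mul_of_nonneg_right h1 (pow_two_mul_nonneg _ _)
    have hf's : Summable (fun n => if n = N then 0 else
        ((1 + ε)⁻¹ * ((z i).2 n + if n = N then 1 else 0)) ^ (2 * (n + 1))) := by
      apply Summable.of_nonneg_of_le (fun n => ?_) (fun n => ?_) hfs
      · split_ifs
        exacts [le_rfl, pow_two_mul_nonneg _ _]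
      · split_ifs
        exacts [pow_two_mul_nonneg _ _, le_rfl]
    have hsum_le : (∑' n, if n = N then 0 else
        ((1 + ε)⁻¹ * ((z i).2 n + if n = N then 1 else 0)) ^ (2 * (n + 1)))
        ≤ (l/(1+ε)) * ∑' n, (l⁻¹ * (z i).2 n) ^ (2 * (n + 1)) := by
      rw [← tsum_mul_left]
      exact Summable.tsum_le_tsum hterm hf's (hgs.mul_left _)
    have hnorm_eq : ‖(1+ε)⁻¹ • (z i).1‖ = (l/(1+ε)) * ‖l⁻¹ • (z i).1‖ := by
      rw [norm_smul, norm_smul, Real.norm_eq_abs, Real.norm_eq_abs,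
        abs_of_pos (inv_pos.mpr hu), abs_of_pos (inv_pos.mpr hl0), ← mul_assoc]
      congr 1
      field_simp
    have hfN : ((1 + ε)⁻¹ * ((z i).2 N + if N = N then (1:ℝ) else 0)) ^ (2 * (N + 1))
        ≤ (ε/2)/(1+ε) := by
      rw [if_pos rfl]
      have hbase : |(1+ε)⁻¹ * ((z i).2 N + 1)| ≤ q := by
        rw [abs_mul, abs_of_pos (inv_pos.mpr hu), hq, div_eq_inv_mul]
        refine mul_le_mul_of_nonneg_left ?_ (inv_nonneg.mpr hu.le)
        calc |(z i).2 N + 1| ≤ |(z i).2 N| + 1 := by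
              simpa using abs_add_le ((z i).2 N) 1
          _ ≤ 1 + ε/2 := by have := hN1 i; linarith
      calc ((1+ε)⁻¹ * ((z i).2 N + 1)) ^ (2*(N+1))
          = |(1+ε)⁻¹ * ((z i).2 N + 1)| ^ (2*(N+1)) := by
            rw [pow_mul, pow_mul, ← sq_abs]
        _ ≤ q ^ (2*(N+1)) := pow_le_pow_left₀ (abs_nonneg _) hbase _
        _ ≤ (ε/2)/(1+ε) := hN2
    have hmul : (l/(1+ε)) * ‖l⁻¹ • (z i).1‖
        + (l/(1+ε)) * ∑' n, (l⁻¹ * (z i).2 n) ^ (2 * (n + 1)) ≤ l/(1+ε) := by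
      rw [← mul_add]
      nth_rewrite 2 [← mul_one (l/(1+ε))]
      exact mul_le_mul_of_nonneg_left hΦ' (div_nonneg hl0.le hu.le)
    have hl2' : l/(1+ε) ≤ (1+ε/2)/(1+ε) := by gcongr
    have hfinal : (1+ε/2)/(1+ε) + (ε/2)/(1+ε) = 1 := by
      rw [← add_div, div_eq_one_iff_eq hu.ne']
      ring
    linarith [hsum_le, hnorm_eq, hmul, hfN, hl2', hfinal]
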